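/- Let θ > 0, z_c = θ/2, δ̂ > 0, and parametrize w(r) = z_c + δ̂ + ir for r ≥ 0. Then for G(z) = log Γ(z) - log Γ(θ-z) - 2Ψ(z_c)z, the map r ↦ Re(G(w(r))) is nondecreasing on (0, ∞). -/

import Mathlib

noncomputable def digamma (z : ℝ) : ℝ :=
  -Real.eulerMascheroniConstant + ∑' n : ℕ, (1 / (n + 1) - 1 / (n + z))

open Complex Filter Finset in
private lemma absSeq_eq (n : ℕ) (hn : 1 ≤ n) (x r : ℝ) :
    ‖Complex.GammaSeq ((x : ℂ) + Complex.I * r) n‖ =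
      (n : ℝ) ^ x * n.factorial / ∏ j ∈ Finset.range (n + 1),
        Real.sqrt ((x + j) ^ 2 + r ^ 2) := by
  rw [Complex.GammaSeq, norm_div, norm_mul, norm_prod]
  have hn' : (0 : ℝ) < n := by exact_mod_cast hn
  congr 1
  · congr 1
    · rw [show ((n : ℂ)) = ((n : ℝ) : ℂ) by push_cast; ring,
        Complex.norm_cpow_eq_rpow_re_of_pos hn']
      norm_num
    · simp
  · refine Finset.prod_congr rfl fun j _ => ?_
    rw [Complex.norm_def]
    congr 1
    simp [Complex.normSq_apply]
    ring

open Complex Filter Finset in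
private lemma gamma_abs_key (a b r1 r2 : ℝ) (ha : 0 < a) (hab : 0 ≤ a + b) (hba : b ≤ a)
    (hr1 : 0 < r1) (h12 : r1 ≤ r2) :
    ‖Complex.Gamma ((a : ℂ) + Complex.I * r1)‖ *
      ‖Complex.Gamma ((b : ℂ) + Complex.I * r2)‖ ≤
    ‖Complex.Gamma ((a : ℂ) + Complex.I * r2)‖ *
      ‖Complex.Gamma ((b : ℂ) + Complex.I * r1)‖ := by
  have hr2 : 0 < r2 := hr1.trans_le h12
  have tend : ∀ (x r : ℝ), Tendsto (fun n => ‖Complex.GammaSeq ((x : ℂ) + Complex.I * r) n‖)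
      atTop (nhds (‖Complex.Gamma ((x : ℂ) + Complex.I * r)‖)) :=
    fun x r => (continuous_norm.tendsto _).comp (Complex.GammaSeq_tendsto_Gamma _)
  refine le_of_tendsto_of_tendsto ((tend a r1).mul (tend b r2)) ((tend a r2).mul (tend b r1)) ?_
  filter_upwards [eventually_ge_atTop 1] with n hn
  rw [absSeq_eq n hn, absSeq_eq n hn, absSeq_eq n hn, absSeq_eq n hn]
  have hP : ∀ (x r : ℝ), 0 < r → 0 < ∏ j ∈ Finset.range (n + 1), Real.sqrt ((x + j) ^ 2 + r ^ 2) :=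
    fun x r hr => Finset.prod_pos fun j _ => Real.sqrt_pos.mpr (by positivity)
  rw [div_mul_div_comm, div_mul_div_comm]
  have hK : (0:ℝ) ≤ (n : ℝ) ^ a * n.factorial * ((n : ℝ) ^ b * n.factorial) := by positivity
  refine div_le_div_of_nonneg_left hK (mul_pos (hP a r2 hr2) (hP b r1 hr1)) ?_
  rw [← Finset.prod_mul_distrib, ← Finset.prod_mul_distrib]
  refine Finset.prod_le_prod (fun j _ => by positivity) fun j _ => ?_
  rw [← Real.sqrt_mul (by positivity), ← Real.sqrt_mul (by positivity)]
  refine Real.sqrt_le_sqrt ?_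
  have hj : (0 : ℝ) ≤ j := Nat.cast_nonneg j
  have h1 : 0 ≤ (a - b) * (a + b + 2 * j) := mul_nonneg (by linarith) (by linarith)
  have h2 : 0 ≤ r2 ^ 2 - r1 ^ 2 := by nlinarith
  nlinarith [mul_nonneg h1 h2]

theorem stmt10 (θ : ℝ) (hθ : 0 < θ) (δ : ℝ) (hδ : 0 < δ) (G : ℂ → ℂ)
    (hG : ∀ z, G z = Complex.log (Complex.Gamma z) - Complex.log (Complex.Gamma (θ - z))
        - 2 * (digamma (θ / 2) : ℂ) * z) :
    MonotoneOn (fun r : ℝ => (G ((θ / 2 + δ : ℝ) + Complex.I * (r : ℂ))).re)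
      (Set.Ioi (0 : ℝ)) := by
  intro r1 hr1 r2 hr2 h12
  simp only [Set.mem_Ioi] at hr1 hr2
  have hconj : ∀ r : ℝ, (θ : ℂ) - (((θ / 2 + δ : ℝ) : ℂ) + Complex.I * r) =
      (starRingEnd ℂ) (((θ / 2 - δ : ℝ) : ℂ) + Complex.I * r) := by
    intro r
    push_cast
    simp only [map_add, map_sub, map_mul, map_div₀, map_ofNat, Complex.conj_I,
      Complex.conj_ofReal]
    ring
  have habsΓ : ∀ r : ℝ,
      ‖Complex.Gamma ((θ : ℂ) - (((θ / 2 + δ : ℝ) : ℂ) + Complex.I * r))‖ =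
      ‖Complex.Gamma (((θ / 2 - δ : ℝ) : ℂ) + Complex.I * r)‖ := by
    intro r
    rw [hconj, Complex.Gamma_conj, Complex.norm_conj]
  have hne : ∀ (x r : ℝ), 0 < r → Complex.Gamma ((x : ℂ) + Complex.I * r) ≠ 0 := by
    intro x r hr
    apply Complex.Gamma_ne_zero
    intro m h
    have := congrArg Complex.im h
    simp at this
    linarith
  have hpos : ∀ (x r : ℝ), 0 < r → 0 < ‖Complex.Gamma ((x : ℂ) + Complex.I * r)‖ :=
    fun x r hr => norm_pos_iff.mpr (hne x r hr)
  have hkey := gamma_abs_key (θ / 2 + δ) (θ / 2 - δ) r1 r2 (by linarith) (by linarith)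
    (by linarith) hr1 h12
  have A1 := hpos (θ / 2 + δ) r1 hr1
  have A2 := hpos (θ / 2 + δ) r2 (hr1.trans_le h12)
  have B1 := hpos (θ / 2 - δ) r1 hr1
  have B2 := hpos (θ / 2 - δ) r2 (hr1.trans_le h12)
  have hlog := (Real.log_le_log_iff (mul_pos A1 B2) (mul_pos A2 B1)).mpr hkey
  rw [Real.log_mul A1.ne' B2.ne', Real.log_mul A2.ne' B1.ne'] at hlog
  simp only [hG, Complex.sub_re, Complex.log_re, habsΓ, Complex.mul_re, Complex.mul_im,
    Complex.add_re, Complex.add_im, Complex.I_re, Complex.I_im, Complex.ofReal_re,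
    Complex.ofReal_im, Complex.re_ofNat, Complex.im_ofNat]
  ring_nf
  ring_nf at hlog
  linarith
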